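/- If n is odd, the only good involution of the dihedral quandle R_n is the identity map. -/
import Mathlib

/-- Dihedral quandle operation on `ZMod n`: `a * b = 2b - a`. -/
def dOp (n : ℕ) (a b : ZMod n) : ZMod n := 2 * b - a

/-- `ρ` is a good involution of the quandle with operation `op`. -/
def IsGoodInvolution {Q : Type*} (op : Q → Q → Q) (ρ : Q → Q) : Prop :=
  Function.Involutive ρ ∧ (∀ a b, ρ (op a b) = op (ρ a) b) ∧
    (∀ a b, op (op a (ρ b)) b = a)

/-- For odd `n`, the only good involution of `R_n` is the identity. -/
theorem stmt5 (n : ℕ) (hn : Odd n) (ρ : ZMod n → ZMod n)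
    (hρ : IsGoodInvolution (dOp n) ρ) : ρ = id := by
  have hnz : NeZero n := ⟨by rintro rfl; simp [Nat.odd_iff] at hn⟩
  have hu : IsUnit (2 : ZMod n) := by
    have : IsUnit ((2 : ℕ) : ZMod n) :=
      (ZMod.isUnit_iff_coprime 2 n).mpr (Nat.coprime_two_left.mpr hn)
    simpa using this
  funext b
  have h := hρ.2.2 0 b
  simp only [dOp] at h
  have h2 : (2 : ZMod n) * ρ b = 2 * b := by linear_combination -h
  simpa using hu.mul_left_cancel h2
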